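/- Let γ = (p₁, ..., pₙ) and γ̃ = (q₁, ..., qₙ) be sequences of points in ℝ², n ≥ 3, such that |p_{i+1} - p_i| = |q_{i+1} - q_i| for all i, each consecutive triple is non-collinear, and the signed angles agree at every interior point: ∠(p_{i-1}, p_i, p_{i+1}) = ∠(q_{i-1}, q_i, q_{i+1}) with the same orientation sign for 1 < i < n. Then there exists a unique g ∈ SE(2) with g(p_i) = q_i for all i. -/
import Mathlib


noncomputable section

/-- Points of the plane `ℝ²`. -/
abbrev Pt : Type := ℝ × ℝ

/-- Euclidean distance on the plane. -/
def dist2 (p q : Pt) : ℝ := Real.sqrt ((p.1 - q.1) ^ 2 + (p.2 - q.2) ^ 2)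

/-- The 2d cross product `u × v = u₁v₂ - u₂v₁`. -/
def cross2 (u v : Pt) : ℝ := u.1 * v.2 - u.2 * v.1

/-- `f` is a direct isometry of the plane (element of `SE(2)`):
`x ↦ Ax + b` with `A ∈ SO(2)`, `b ∈ ℝ²`. -/
def IsSE2 (f : Pt → Pt) : Prop :=
  ∃ a b c d : ℝ, a ^ 2 + b ^ 2 = 1 ∧
    ∀ x : Pt, f x = (a * x.1 - b * x.2 + c, b * x.1 + a * x.2 + d)

/-- `f` is a Euclidean isometry of the plane (element of `E(2) = O(2) ⋉ ℝ²`):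
`x ↦ Ax + b` with `A ∈ O(2)` of determinant `1` or `-1`. -/
def IsE2 (f : Pt → Pt) : Prop :=
  ∃ a b c d : ℝ, a ^ 2 + b ^ 2 = 1 ∧
    ((∀ x : Pt, f x = (a * x.1 - b * x.2 + c, b * x.1 + a * x.2 + d)) ∨
     (∀ x : Pt, f x = (a * x.1 + b * x.2 + c, b * x.1 - a * x.2 + d)))

/-- The unsigned angle `∠(p₁, p, p₂)` at the vertex `p`. -/
def angAt (p₁ p p₂ : Pt) : ℝ :=
  Real.arccos (((p₁.1 - p.1) * (p₂.1 - p.1) + (p₁.2 - p.2) * (p₂.2 - p.2)) /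
    (dist2 p p₁ * dist2 p p₂))

def dot2 (u v : Pt) : ℝ := u.1 * v.1 + u.2 * v.2

lemma dist2_sq (p q : Pt) : dist2 p q ^ 2 = (p.1 - q.1) ^ 2 + (p.2 - q.2) ^ 2 := by
  rw [dist2, Real.sq_sqrt]; positivity

lemma dist2_nonneg (p q : Pt) : 0 ≤ dist2 p q := Real.sqrt_nonneg _

lemma lagrange (u v : Pt) :
    dot2 u v ^ 2 + cross2 u v ^ 2 = (u.1 ^ 2 + u.2 ^ 2) * (v.1 ^ 2 + v.2 ^ 2) := by
  simp only [dot2, cross2]; ring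

lemma cross_ne_zero_right (u v : Pt) (h : cross2 u v ≠ 0) : v.1 ^ 2 + v.2 ^ 2 ≠ 0 := by
  intro h0
  have h1 : v.1 = 0 := by nlinarith [sq_nonneg v.1, sq_nonneg v.2]
  have h2 : v.2 = 0 := by nlinarith [sq_nonneg v.1, sq_nonneg v.2]
  exact h (by simp [cross2, h1, h2])

lemma cross_ne_zero_left (u v : Pt) (h : cross2 u v ≠ 0) : u.1 ^ 2 + u.2 ^ 2 ≠ 0 := by
  intro h0
  have h1 : u.1 = 0 := by nlinarith [sq_nonneg u.1, sq_nonneg u.2]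
  have h2 : u.2 = 0 := by nlinarith [sq_nonneg u.1, sq_nonneg u.2]
  exact h (by simp [cross2, h1, h2])

/-- a vector is determined by its dot and cross products with a nonzero vector -/
lemma vec_determined (v v' w : Pt) (hw : w.1 ^ 2 + w.2 ^ 2 ≠ 0)
    (h1 : dot2 v w = dot2 v' w) (h2 : cross2 v w = cross2 v' w) : v = v' := by
  simp only [dot2, cross2] at h1 h2
  have e1 : (v.1 - v'.1) * (w.1 ^ 2 + w.2 ^ 2) = 0 := by linear_combination w.1 * h1 + w.2 * h2
  have e2 : (v.2 - v'.2) * (w.1 ^ 2 + w.2 ^ 2) = 0 := by linear_combination w.2 * h1 - w.1 * h2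
  have a1 : v.1 = v'.1 := by
    rcases mul_eq_zero.mp e1 with h | h
    · linarith
    · exact absurd h hw
  have a2 : v.2 = v'.2 := by
    rcases mul_eq_zero.mp e2 with h | h
    · linarith
    · exact absurd h hw
  exact Prod.ext a1 a2

lemma sign_sq_eq (x y : ℝ) (hx : x ≠ 0) (hsq : x ^ 2 = y ^ 2)
    (hs : Real.sign x = Real.sign y) : x = y := by
  rcases sq_eq_sq_iff_eq_or_eq_neg.mp hsq with h | h
  · exact h
  · exfalso
    have hy : y ≠ 0 := by rintro rfl; simp at h; exact hx h
    rw [h, Real.sign_neg] at hs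
    rcases lt_or_gt_of_ne hy with h' | h'
    · rw [Real.sign_of_neg h'] at hs; norm_num at hs
    · rw [Real.sign_of_pos h'] at hs; norm_num at hs

lemma normsq_sub (A B : Pt) : (A - B).1 ^ 2 + (A - B).2 ^ 2 = dist2 B A ^ 2 := by
  rw [dist2_sq]; simp only [Prod.fst_sub, Prod.snd_sub]; ring

lemma step_lemma (A B C A' B' C' : Pt)
    (hAB : dist2 B A = dist2 B' A')
    (hBC : dist2 B C = dist2 B' C')
    (hc : cross2 (C - B) (A - B) ≠ 0) (hc' : cross2 (C' - B') (A' - B') ≠ 0)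
    (hang : angAt A B C = angAt A' B' C')
    (hs : Real.sign (cross2 (C - B) (A - B)) = Real.sign (cross2 (C' - B') (A' - B'))) :
    dot2 (C - B) (A - B) = dot2 (C' - B') (A' - B') ∧
    cross2 (C - B) (A - B) = cross2 (C' - B') (A' - B') := by
  set D := dot2 (C - B) (A - B) with hD
  set X := cross2 (C - B) (A - B) with hX
  set D' := dot2 (C' - B') (A' - B') with hD'
  set X' := cross2 (C' - B') (A' - B') with hX'
  have hlag : D ^ 2 + X ^ 2 = (dist2 B A * dist2 B C) ^ 2 := by
    have := lagrange (C - B) (A - B)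
    rw [normsq_sub, normsq_sub] at this
    rw [hD, hX, this]; ring
  have hlag' : D' ^ 2 + X' ^ 2 = (dist2 B' A' * dist2 B' C') ^ 2 := by
    have := lagrange (C' - B') (A' - B')
    rw [normsq_sub, normsq_sub] at this
    rw [hD', hX', this]; ring
  -- positivity of the products of lengths
  have hApos : 0 < dist2 B A := by
    rcases (dist2_nonneg B A).lt_or_eq with h | h
    · exact h
    · exfalso
      apply cross_ne_zero_right _ _ hc
      rw [normsq_sub, ← h]; ring
  have hCpos : 0 < dist2 B C := by
    rcases (dist2_nonneg B C).lt_or_eq with h | h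
    · exact h
    · exfalso
      apply cross_ne_zero_left _ _ hc
      rw [normsq_sub, ← h]; ring
  have hP : 0 < dist2 B A * dist2 B C := mul_pos hApos hCpos
  have hP' : dist2 B' A' * dist2 B' C' = dist2 B A * dist2 B C := by rw [hAB, hBC]
  -- the angle numerators
  have hnum : angAt A B C = Real.arccos (D / (dist2 B A * dist2 B C)) := by
    rw [angAt, hD, dot2]
    simp only [Prod.fst_sub, Prod.snd_sub]
    ring_nf
  have hnum' : angAt A' B' C' = Real.arccos (D' / (dist2 B' A' * dist2 B' C')) := by
    rw [angAt, hD', dot2]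
    simp only [Prod.fst_sub, Prod.snd_sub]
    ring_nf
  -- ratio in [-1, 1]
  have hb : D ^ 2 ≤ (dist2 B A * dist2 B C) ^ 2 := by nlinarith [sq_nonneg X]
  have hb' : D' ^ 2 ≤ (dist2 B' A' * dist2 B' C') ^ 2 := by nlinarith [sq_nonneg X']
  have hr1 : -1 ≤ D / (dist2 B A * dist2 B C) := by
    rw [le_div_iff₀ hP]; nlinarith
  have hr2 : D / (dist2 B A * dist2 B C) ≤ 1 := by
    rw [div_le_one hP]; nlinarith
  have hr1' : -1 ≤ D' / (dist2 B' A' * dist2 B' C') := by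
    rw [le_div_iff₀ (hP' ▸ hP)]; nlinarith [hP' ▸ hP]
  have hr2' : D' / (dist2 B' A' * dist2 B' C') ≤ 1 := by
    rw [div_le_one (hP' ▸ hP)]; nlinarith [hP' ▸ hP]
  have hcos : D / (dist2 B A * dist2 B C) = D' / (dist2 B' A' * dist2 B' C') := by
    have := congrArg Real.cos (hnum ▸ hnum' ▸ hang)
    rwa [Real.cos_arccos hr1 hr2, Real.cos_arccos hr1' hr2'] at this
  have hDeq : D = D' := by
    rw [hP'] at hcos
    field_simp at hcos
    exact hcos
  refine ⟨hDeq, ?_⟩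
  have hXsq : X ^ 2 = X' ^ 2 := by
    rw [hP'] at hlag'
    linear_combination hlag - hlag' - (D + D') * hDeq
  exact sign_sq_eq _ _ hc hXsq hs

def rot (a b : ℝ) (x : Pt) : Pt := (a * x.1 - b * x.2, b * x.1 + a * x.2)

lemma dot2_rot (a b : ℝ) (h : a ^ 2 + b ^ 2 = 1) (u v : Pt) :
    dot2 (rot a b u) (rot a b v) = dot2 u v := by
  simp only [rot, dot2]
  linear_combination (u.1 * v.1 + u.2 * v.2) * h

lemma cross2_rot (a b : ℝ) (h : a ^ 2 + b ^ 2 = 1) (u v : Pt) :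
    cross2 (rot a b u) (rot a b v) = cross2 u v := by
  simp only [rot, cross2]
  linear_combination (u.1 * v.2 - u.2 * v.1) * h

lemma dist2_comm (x y : Pt) : dist2 x y = dist2 y x := by
  unfold dist2; ring_nf

lemma dist2_sq_eq {x y x' y' : Pt} (h : dist2 x y = dist2 x' y') :
    (x.1 - y.1) ^ 2 + (x.2 - y.2) ^ 2 = (x'.1 - y'.1) ^ 2 + (x'.2 - y'.2) ^ 2 := by
  rw [← dist2_sq, ← dist2_sq, h]

/-- Theorem 3.3 (simplest Signature-inverse theorem): two polygonal meshes
`p₀, …, p_{n-1}` and `q₀, …, q_{n-1}` (`n ≥ 3`) with equal corresponding edge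
lengths, non-collinear consecutive triples, and equal signed angles (equal
unsigned angles with the same orientation sign) at every interior point are
related by a unique direct isometry of the plane. -/
theorem signature_inverse_edges_and_signed_angles (n : ℕ) (hn : 3 ≤ n)
    (p q : ℕ → Pt)
    (hlen : ∀ i, i + 1 < n → dist2 (p (i + 1)) (p i) = dist2 (q (i + 1)) (q i))
    (hncp : ∀ i, 0 < i → i + 1 < n →
      cross2 (p (i + 1) - p i) (p (i - 1) - p i) ≠ 0)
    (hncq : ∀ i, 0 < i → i + 1 < n →
      cross2 (q (i + 1) - q i) (q (i - 1) - q i) ≠ 0)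
    (hang : ∀ i, 0 < i → i + 1 < n →
      angAt (p (i - 1)) (p i) (p (i + 1)) = angAt (q (i - 1)) (q i) (q (i + 1)))
    (hsgn : ∀ i, 0 < i → i + 1 < n →
      Real.sign (cross2 (p (i + 1) - p i) (p (i - 1) - p i)) =
        Real.sign (cross2 (q (i + 1) - q i) (q (i - 1) - q i))) :
    ∃! f : Pt → Pt, IsSE2 f ∧ ∀ i < n, f (p i) = q i := by
  have h2n : 1 + 1 < n := by omega
  have hcp1 : cross2 (p 2 - p 1) (p 0 - p 1) ≠ 0 := hncp 1 one_pos h2n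
  set u : Pt := p 1 - p 0 with hu
  set u' : Pt := q 1 - q 0 with hu'
  set L2 : ℝ := u.1 ^ 2 + u.2 ^ 2 with hL2
  have huL : L2 = dist2 (p 0) (p 1) ^ 2 := (normsq_sub _ _)
  have hL2ne : L2 ≠ 0 := by
    have h0 := cross_ne_zero_right _ _ hcp1
    intro h
    apply h0
    rw [normsq_sub, ← dist2_comm, ← huL, h]
  have hL2pos : 0 < L2 := lt_of_le_of_ne (by positivity) (Ne.symm hL2ne)
  have hL2' : u'.1 ^ 2 + u'.2 ^ 2 = L2 := by
    rw [normsq_sub, hL2, normsq_sub, dist2_comm (p 0), dist2_comm (q 0), hlen 0 (by omega)]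
  set a : ℝ := dot2 u u' / L2 with ha
  set b : ℝ := cross2 u u' / L2 with hb
  have hab : a ^ 2 + b ^ 2 = 1 := by
    rw [ha, hb]
    field_simp
    linear_combination lagrange u u' + (u.1 ^ 2 + u.2 ^ 2) * hL2'
  have hRu : rot a b u = u' := by
    have h1 : a * u.1 - b * u.2 = u'.1 := by
      rw [ha, hb]
      field_simp
      simp only [dot2, cross2, hL2]
      ring
    have h2 : b * u.1 + a * u.2 = u'.2 := by
      rw [ha, hb]
      field_simp
      simp only [dot2, cross2, hL2]
      ring
    exact Prod.ext h1 h2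
  set c : ℝ := (q 0).1 - (a * (p 0).1 - b * (p 0).2) with hc
  set d : ℝ := (q 0).2 - (b * (p 0).1 + a * (p 0).2) with hd
  set f : Pt → Pt := fun x => (a * x.1 - b * x.2 + c, b * x.1 + a * x.2 + d) with hf
  have hfsub : ∀ x y : Pt, f x - f y = rot a b (x - y) := by
    intro x y
    rw [hf]
    refine Prod.ext ?_ ?_ <;>
      simp only [rot, Prod.fst_sub, Prod.snd_sub] <;> ring
  have hf0 : f (p 0) = q 0 := by
    rw [hf]
    refine Prod.ext ?_ ?_ <;> simp only [hc, hd] <;> ring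
  have hf1 : f (p 1) = q 1 := by
    have := hfsub (p 1) (p 0)
    rw [← hu, hRu, hf0, hu'] at this
    have := congrArg (· + q 0) this
    simpa using this
  have key : ∀ i, i < n → f (p i) = q i := by
    intro i
    induction i using Nat.strong_induction_on with
    | _ i ih =>
      match i with
      | 0 => intro _; exact hf0
      | 1 => intro _; exact hf1
      | (k + 2) =>
        intro hi
        have fk : f (p k) = q k := ih k (by omega) (by omega)
        have fk1 : f (p (k + 1)) = q (k + 1) := ih (k + 1) (by omega) (by omega)
        have e12 : k + 1 + 1 = k + 2 := rfl
        have hcp : cross2 (p (k + 2) - p (k + 1)) (p k - p (k + 1)) ≠ 0 := by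
          have h := hncp (k + 1) (Nat.succ_pos k) (by omega)
          simpa using h
        have hcq : cross2 (q (k + 2) - q (k + 1)) (q k - q (k + 1)) ≠ 0 := by
          have h := hncq (k + 1) (Nat.succ_pos k) (by omega)
          simpa using h
        have hangk : angAt (p k) (p (k + 1)) (p (k + 2)) =
            angAt (q k) (q (k + 1)) (q (k + 2)) := by
          have h := hang (k + 1) (Nat.succ_pos k) (by omega)
          simpa using h
        have hsgnk : Real.sign (cross2 (p (k + 2) - p (k + 1)) (p k - p (k + 1))) =
            Real.sign (cross2 (q (k + 2) - q (k + 1)) (q k - q (k + 1))) := by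
          have h := hsgn (k + 1) (Nat.succ_pos k) (by omega)
          simpa using h
        obtain ⟨hdot, hcross⟩ := step_lemma (p k) (p (k + 1)) (p (k + 2))
          (q k) (q (k + 1)) (q (k + 2))
          (hlen k (by omega))
          (by rw [dist2_comm, dist2_comm (q (k+1))]; exact hlen (k + 1) (by omega))
          hcp hcq hangk hsgnk
        have hRw : rot a b (p k - p (k + 1)) = q k - q (k + 1) := by
          rw [← hfsub, fk, fk1]
        have hv : rot a b (p (k + 2) - p (k + 1)) = q (k + 2) - q (k + 1) := by
          apply vec_determined _ _ (q k - q (k + 1))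
            (cross_ne_zero_right _ _ hcq)
          · conv_lhs => rw [← hRw]
            rw [dot2_rot a b hab]
            exact hdot
          · conv_lhs => rw [← hRw]
            rw [cross2_rot a b hab]
            exact hcross
        have := hfsub (p (k + 2)) (p (k + 1))
        rw [hv, fk1] at this
        have := congrArg (· + q (k + 1)) this
        simpa using this
  refine ⟨f, ⟨⟨a, b, c, d, hab, fun x => rfl⟩, key⟩, ?_⟩
  rintro g ⟨⟨a', b', c', d', hab', hg⟩, hgi⟩
  have hg0 : g (p 0) = q 0 := hgi 0 (by omega)
  have hg1 : g (p 1) = q 1 := hgi 1 (by omega)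
  have E0 : ((a' * (p 0).1 - b' * (p 0).2 + c', b' * (p 0).1 + a' * (p 0).2 + d') : Pt)
      = ((a * (p 0).1 - b * (p 0).2 + c, b * (p 0).1 + a * (p 0).2 + d) : Pt) := by
    rw [← hg (p 0), hg0, ← hf0, hf]
  have E1 : ((a' * (p 1).1 - b' * (p 1).2 + c', b' * (p 1).1 + a' * (p 1).2 + d') : Pt)
      = ((a * (p 1).1 - b * (p 1).2 + c, b * (p 1).1 + a * (p 1).2 + d) : Pt) := by
    rw [← hg (p 1), hg1, ← hf1, hf]
  obtain ⟨E01, E02⟩ := Prod.ext_iff.mp E0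
  obtain ⟨E11, E12⟩ := Prod.ext_iff.mp E1
  simp only at E01 E02 E11 E12
  have r1 : (a' - a) * u.1 - (b' - b) * u.2 = 0 := by
    rw [hu]; simp only [Prod.fst_sub, Prod.snd_sub]
    linear_combination E11 - E01
  have r2 : (b' - b) * u.1 + (a' - a) * u.2 = 0 := by
    rw [hu]; simp only [Prod.fst_sub, Prod.snd_sub]
    linear_combination E12 - E02
  have hsum : ((a' - a) ^ 2 + (b' - b) ^ 2) * L2 = 0 := by
    rw [hL2]
    linear_combination ((a' - a) * u.1 - (b' - b) * u.2) * r1 +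
      ((b' - b) * u.1 + (a' - a) * u.2) * r2
  have hzero : (a' - a) ^ 2 + (b' - b) ^ 2 = 0 :=
    (mul_eq_zero.mp hsum).resolve_right hL2ne
  have haa : a' = a := by
    have h1 : (a' - a) ^ 2 = 0 := by linarith [sq_nonneg (a' - a), sq_nonneg (b' - b)]
    have h2 : a' - a = 0 := pow_eq_zero_iff two_ne_zero |>.mp h1
    linarith
  have hbb : b' = b := by
    have h1 : (b' - b) ^ 2 = 0 := by linarith [sq_nonneg (a' - a), sq_nonneg (b' - b)]
    have h2 : b' - b = 0 := pow_eq_zero_iff two_ne_zero |>.mp h1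
    linarith
  have hcc : c' = c := by linear_combination E01 - (p 0).1 * haa + (p 0).2 * hbb
  have hdd : d' = d := by linear_combination E02 - (p 0).1 * hbb - (p 0).2 * haa
  funext x
  rw [hg x, hf, haa, hbb, hcc, hdd]
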